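/- Let n ∈ ℕ, ω a modulus of continuity, x ∈ [a,b], p integrable on [a,b]. Then sup over f ∈ W^n H^ω[a,b] of |∫_a^b p(t) f(t) dt − Σ_{k=0}^{n−1} (1/k!)(∫_a^b p(t)(t−x)^k dt) f^{(k)}(x)| equals sup over g ∈ H^ω[a,b] of |∫_a^b r_x^n(t) g(t) dt|. -/

import Mathlib

open MeasureTheory intervalIntegral

/-- The kernels `r_x^k`: `r_x^0 = p` and
`r_x^{k+1}(s) = −∫_a^s r_x^k` for `s ≤ x`, `∫_s^b r_x^k` for `s ≥ x`. -/
noncomputable def rk (a b x : ℝ) (p : ℝ → ℝ) : ℕ → ℝ → ℝ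
  | 0 => p
  | k + 1 => fun s =>
      if s ≤ x then -(∫ t in a..s, rk a b x p k t)
      else ∫ t in s..b, rk a b x p k t

section Aux
open Set

variable {a b x : ℝ} {p : ℝ → ℝ}


lemma swap_left {a c : ℝ} (hac : a ≤ c) {f g : ℝ → ℝ}
    (hf : IntervalIntegrable f volume a c) (hg : IntervalIntegrable g volume a c) :
    ∫ s in a..c, (∫ t in a..s, f t) * g s = ∫ t in a..c, f t * (∫ s in t..c, g s) := by
  have hf' : IntegrableOn f (Ioc a c) volume :=
    (intervalIntegrable_iff_integrableOn_Ioc_of_le hac).1 hf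
  have hg' : IntegrableOn g (Ioc a c) volume :=
    (intervalIntegrable_iff_integrableOn_Ioc_of_le hac).1 hg
  set μ := volume.restrict (Ioc a c) with hμ
  set F : ℝ → ℝ → ℝ := fun s t => if t ≤ s then f t * g s else 0 with hF
  have hFi : Integrable (Function.uncurry F) (μ.prod μ) := by
    have heq : Function.uncurry F =
        Set.indicator {z : ℝ × ℝ | z.2 ≤ z.1} (fun z => g z.1 * f z.2) := by
      funext z
      simp only [Function.uncurry, hF, Set.indicator_apply, Set.mem_setOf_eq]
      split <;> ring
    rw [heq]
    exact (Integrable.mul_prod hg' hf').indicator (measurableSet_le measurable_snd measurable_fst)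
  have key : ∫ s, (∫ t, F s t ∂μ) ∂μ = ∫ t, (∫ s, F s t ∂μ) ∂μ :=
    MeasureTheory.integral_integral_swap hFi
  rw [intervalIntegral.integral_of_le hac, intervalIntegral.integral_of_le hac]
  have lhs_eq : ∫ s in Ioc a c, (∫ t in a..s, f t) * g s = ∫ s, (∫ t, F s t ∂μ) ∂μ := by
    refine setIntegral_congr_fun measurableSet_Ioc (fun s hs => ?_)
    have h1 : ∀ t, F s t = Set.indicator (Iic s) (fun t => f t * g s) t := by
      intro t; simp [hF, Set.indicator_apply]
    calc (∫ t in a..s, f t) * g s = (∫ t in Ioc a s, f t) * g s := by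
          rw [intervalIntegral.integral_of_le hs.1.le]
      _ = ∫ t in Ioc a s, f t * g s := (MeasureTheory.integral_mul_const _ _).symm
      _ = ∫ t, Set.indicator (Iic s) (fun t => f t * g s) t ∂μ := by
          have hset : Iic s ∩ Ioc a c = Ioc a s := by
            ext u
            simp only [mem_inter_iff, mem_Iic, mem_Ioc]
            constructor
            · rintro ⟨h1, h2, h3⟩; exact ⟨h2, h1⟩
            · rintro ⟨h1, h2⟩; exact ⟨h2, h1, h2.trans hs.2⟩
          rw [hμ, MeasureTheory.integral_indicator measurableSet_Iic,
            Measure.restrict_restrict measurableSet_Iic, hset]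
      _ = ∫ t, F s t ∂μ := by simp_rw [h1]
  have rhs_eq : ∫ t in Ioc a c, f t * (∫ s in t..c, g s) = ∫ t, (∫ s, F s t ∂μ) ∂μ := by
    refine setIntegral_congr_fun measurableSet_Ioc (fun t ht => ?_)
    have h1 : ∀ s, F s t = Set.indicator (Ici t) (fun s => f t * g s) s := by
      intro s; simp [hF, Set.indicator_apply]
    calc f t * (∫ s in t..c, g s) = f t * (∫ s in Ioc t c, g s) := by
          rw [intervalIntegral.integral_of_le ht.2]
      _ = ∫ s in Ioc t c, f t * g s := (MeasureTheory.integral_const_mul _ _).symm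
      _ = ∫ s in Icc t c, f t * g s := (integral_Icc_eq_integral_Ioc).symm
      _ = ∫ s, Set.indicator (Ici t) (fun s => f t * g s) s ∂μ := by
          have hset : Ici t ∩ Ioc a c = Icc t c := by
            ext u
            simp only [mem_inter_iff, mem_Ici, mem_Ioc, mem_Icc]
            constructor
            · rintro ⟨h1, h2, h3⟩; exact ⟨h1, h3⟩
            · rintro ⟨h1, h2⟩; exact ⟨h1, ht.1.trans_le h1, h2⟩
          rw [hμ, MeasureTheory.integral_indicator measurableSet_Ici,
            Measure.restrict_restrict measurableSet_Ici, hset]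
      _ = ∫ s, F s t ∂μ := by simp_rw [h1]
  rw [lhs_eq, rhs_eq, key]

lemma swap_right {c b : ℝ} (hcb : c ≤ b) {f g : ℝ → ℝ}
    (hf : IntervalIntegrable f volume c b) (hg : IntervalIntegrable g volume c b) :
    ∫ s in c..b, (∫ t in s..b, f t) * g s = ∫ t in c..b, f t * (∫ s in c..t, g s) := by
  have h := swap_left hcb hg hf
  calc ∫ s in c..b, (∫ t in s..b, f t) * g s
      = ∫ s in c..b, g s * (∫ t in s..b, f t) :=
        intervalIntegral.integral_congr (fun s _ => mul_comm _ _)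
    _ = ∫ s in c..b, (∫ t in c..s, g t) * f s := h.symm
    _ = ∫ t in c..b, f t * (∫ s in c..t, g s) :=
        intervalIntegral.integral_congr (fun s _ => mul_comm _ _)

lemma parts_left {a x : ℝ} (hax : a ≤ x) {f h h' : ℝ → ℝ}
    (hf : IntervalIntegrable f volume a x) (hh' : IntervalIntegrable h' volume a x)
    (hrep : ∀ t ∈ Icc a x, h t = h a + ∫ u in a..t, h' u) :
    ∫ s in a..x, (-(∫ t in a..s, f t)) * h' s
      = (∫ t in a..x, f t * h t) - (∫ t in a..x, f t) * h x := by
  set H : ℝ → ℝ := fun t => h a + ∫ u in a..t, h' u with hHdef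
  have hICC : uIcc a x = Icc a x := uIcc_of_le hax
  have hHc : ContinuousOn H (uIcc a x) :=
    continuousOn_const.add (intervalIntegral.continuousOn_primitive_interval'
      hh' left_mem_uIcc)
  have hfH : IntervalIntegrable (fun t => f t * H t) volume a x :=
    hf.mul_continuousOn hHc
  have heqH : EqOn h H (Icc a x) := fun t ht => hrep t ht
  have hHx : h x = H x := hrep x (right_mem_Icc.2 hax)
  have step1 : ∫ s in a..x, (-(∫ t in a..s, f t)) * h' s
      = -∫ s in a..x, (∫ t in a..s, f t) * h' s := by
    simp only [neg_mul]
    exact intervalIntegral.integral_neg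
  have step2 : ∫ s in a..x, (∫ t in a..s, f t) * h' s
      = ∫ t in a..x, f t * (∫ s in t..x, h' s) := swap_left hax hf hh'
  have step3 : ∫ t in a..x, f t * (∫ s in t..x, h' s)
      = ∫ t in a..x, (f t * H x - f t * H t) := by
    refine intervalIntegral.integral_congr (fun t ht => ?_)
    rw [hICC] at ht
    have h1 : IntervalIntegrable h' volume a t :=
      hh'.mono_set (by rw [hICC]; exact Set.uIcc_subset_Icc (left_mem_Icc.2 hax) ht)
    have h2 : (∫ u in a..x, h' u) - ∫ u in a..t, h' u = ∫ s in t..x, h' s :=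
      intervalIntegral.integral_interval_sub_left hh' h1
    rw [← h2, hHdef]
    ring
  have step4 : ∫ t in a..x, (f t * H x - f t * H t)
      = (∫ t in a..x, f t) * H x - ∫ t in a..x, f t * H t := by
    rw [intervalIntegral.integral_sub (hf.mul_const _) hfH,
      intervalIntegral.integral_mul_const]
  have step5 : ∫ t in a..x, f t * h t = ∫ t in a..x, f t * H t :=
    intervalIntegral.integral_congr (fun t ht => by rw [heqH (hICC ▸ ht)])
  rw [step1, step2, step3, step4, step5, hHx]
  ring

lemma parts_right {x b : ℝ} (hxb : x ≤ b) {f h h' : ℝ → ℝ}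
    (hf : IntervalIntegrable f volume x b) (hh' : IntervalIntegrable h' volume x b)
    (hrep : ∀ t ∈ Icc x b, h t = h x + ∫ u in x..t, h' u) :
    ∫ s in x..b, (∫ t in s..b, f t) * h' s
      = (∫ t in x..b, f t * h t) - (∫ t in x..b, f t) * h x := by
  set H : ℝ → ℝ := fun t => h x + ∫ u in x..t, h' u with hHdef
  have hICC : uIcc x b = Icc x b := uIcc_of_le hxb
  have hHc : ContinuousOn H (uIcc x b) :=
    continuousOn_const.add (intervalIntegral.continuousOn_primitive_interval'
      hh' left_mem_uIcc)
  have hfH : IntervalIntegrable (fun t => f t * H t) volume x b :=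
    hf.mul_continuousOn hHc
  have heqH : EqOn h H (Icc x b) := fun t ht => hrep t ht
  have step2 : ∫ s in x..b, (∫ t in s..b, f t) * h' s
      = ∫ t in x..b, f t * (∫ s in x..t, h' s) := swap_right hxb hf hh'
  have step3 : ∫ t in x..b, f t * (∫ s in x..t, h' s)
      = ∫ t in x..b, (f t * H t - f t * H x) := by
    refine intervalIntegral.integral_congr (fun t ht => ?_)
    rw [hICC] at ht
    rw [hHdef]
    simp only [intervalIntegral.integral_same]
    ring
  have step4 : ∫ t in x..b, (f t * H t - f t * H x)
      = (∫ t in x..b, f t * H t) - (∫ t in x..b, f t) * H x := by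
    rw [intervalIntegral.integral_sub hfH (hf.mul_const _),
      intervalIntegral.integral_mul_const]
  have step5 : ∫ t in x..b, f t * h t = ∫ t in x..b, f t * H t :=
    intervalIntegral.integral_congr (fun t ht => by rw [heqH (hICC ▸ ht)])
  have hHx : H x = h x := by simp [hHdef]
  rw [step2, step3, step4, step5, hHx]


lemma rk_intble (hax : a ≤ x) (hxb : x ≤ b)
    (hp : IntervalIntegrable p volume a b) (k : ℕ) :
    IntervalIntegrable (rk a b x p k) volume a b := by
  induction k with
  | zero => exact hp
  | succ k ih =>
    have hab : a ≤ b := hax.trans hxb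
    have ih_ax : IntervalIntegrable (rk a b x p k) volume a x :=
      ih.mono_set (by
        rw [uIcc_of_le hab]
        exact Set.uIcc_subset_Icc (left_mem_Icc.2 hab) ⟨hax, hxb⟩)
    have ih_xb : IntervalIntegrable (rk a b x p k) volume x b :=
      ih.mono_set (by
        rw [uIcc_of_le hab]
        exact Set.uIcc_subset_Icc ⟨hax, hxb⟩ (right_mem_Icc.2 hab))
    have l1 : IntervalIntegrable (rk a b x p (k + 1)) volume a x := by
      have hc : ContinuousOn (fun s => -(∫ t in a..s, rk a b x p k t)) (uIcc a x) :=
        (intervalIntegral.continuousOn_primitive_interval' ih_ax left_mem_uIcc).neg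
      have h0 : IntervalIntegrable (fun s => -(∫ t in a..s, rk a b x p k t)) volume a x :=
        hc.intervalIntegrable
      rw [intervalIntegrable_iff] at h0 ⊢
      refine h0.congr_fun (fun s hs => ?_) measurableSet_uIoc
      rw [Set.uIoc_of_le hax] at hs
      simp only [rk, if_pos hs.2]
    have l2 : IntervalIntegrable (rk a b x p (k + 1)) volume x b := by
      have hc : ContinuousOn (fun s => ∫ t in s..b, rk a b x p k t) (uIcc x b) := by
        have h1 : ContinuousOn (fun s => ∫ t in b..s, rk a b x p k t) (uIcc x b) :=
          intervalIntegral.continuousOn_primitive_interval' ih_xb right_mem_uIcc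
        have : (fun s => ∫ t in s..b, rk a b x p k t)
            = fun s => -(∫ t in b..s, rk a b x p k t) := by
          funext s; rw [intervalIntegral.integral_symm]
        rw [this]
        exact h1.neg
      have h0 : IntervalIntegrable (fun s => ∫ t in s..b, rk a b x p k t) volume x b :=
        hc.intervalIntegrable
      rw [intervalIntegrable_iff] at h0 ⊢
      refine h0.congr_fun (fun s hs => ?_) measurableSet_uIoc
      rw [Set.uIoc_of_le hxb] at hs
      simp only [rk, if_neg (not_le.2 hs.1)]
    exact l1.trans l2


lemma rk_step (hax : a ≤ x) (hxb : x ≤ b)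
    (hp : IntervalIntegrable p volume a b) (k : ℕ)
    {h h' : ℝ → ℝ} (hh' : IntervalIntegrable h' volume a b)
    (hrep : ∀ t ∈ Icc a b, h t = h a + ∫ u in a..t, h' u) :
    ∫ s in a..b, rk a b x p (k + 1) s * h' s
      = (∫ t in a..b, rk a b x p k t * h t) - (∫ t in a..b, rk a b x p k t) * h x := by
  have hab : a ≤ b := hax.trans hxb
  have hsub_ax : uIcc a x ⊆ uIcc a b := by
    rw [uIcc_of_le hab, uIcc_of_le hax]; exact Icc_subset_Icc le_rfl hxb
  have hsub_xb : uIcc x b ⊆ uIcc a b := by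
    rw [uIcc_of_le hab, uIcc_of_le hxb]; exact Icc_subset_Icc hax le_rfl
  have hk := rk_intble hax hxb hp k
  have hk_ax : IntervalIntegrable (rk a b x p k) volume a x := hk.mono_set hsub_ax
  have hk_xb : IntervalIntegrable (rk a b x p k) volume x b := hk.mono_set hsub_xb
  have hh'_ax : IntervalIntegrable h' volume a x := hh'.mono_set hsub_ax
  have hh'_xb : IntervalIntegrable h' volume x b := hh'.mono_set hsub_xb
  -- integrability of pieces of the LHS integrand
  have i1 : IntervalIntegrable (fun s => rk a b x p (k + 1) s * h' s) volume a x := by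
    have hc : ContinuousOn (fun s => -(∫ t in a..s, rk a b x p k t)) (uIcc a x) :=
      (intervalIntegral.continuousOn_primitive_interval' hk_ax left_mem_uIcc).neg
    have i0 := hh'_ax.continuousOn_mul hc
    rw [intervalIntegrable_iff] at i0 ⊢
    refine i0.congr_fun (fun s hs => ?_) measurableSet_uIoc
    rw [Set.uIoc_of_le hax] at hs
    simp only [rk, if_pos hs.2]
  have i2 : IntervalIntegrable (fun s => rk a b x p (k + 1) s * h' s) volume x b := by
    have hc : ContinuousOn (fun s => ∫ t in s..b, rk a b x p k t) (uIcc x b) := by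
      have h1 : ContinuousOn (fun s => ∫ t in b..s, rk a b x p k t) (uIcc x b) :=
        intervalIntegral.continuousOn_primitive_interval' hk_xb right_mem_uIcc
      have heq : (fun s => ∫ t in s..b, rk a b x p k t)
          = fun s => -(∫ t in b..s, rk a b x p k t) := by
        funext s; rw [intervalIntegral.integral_symm]
      rw [heq]; exact h1.neg
    have i0 := hh'_xb.continuousOn_mul hc
    rw [intervalIntegrable_iff] at i0 ⊢
    refine i0.congr_fun (fun s hs => ?_) measurableSet_uIoc
    rw [Set.uIoc_of_le hxb] at hs
    simp only [rk, if_neg (not_le.2 hs.1)]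
  -- continuity of h on [a, b]
  have hH : ContinuousOn h (Icc a b) := by
    have hc : ContinuousOn (fun t => h a + ∫ u in a..t, h' u) (uIcc a b) :=
      continuousOn_const.add (intervalIntegral.continuousOn_primitive_interval'
        hh' left_mem_uIcc)
    rw [uIcc_of_le hab] at hc
    exact hc.congr hrep
  have j1 : IntervalIntegrable (fun t => rk a b x p k t * h t) volume a x :=
    hk_ax.mul_continuousOn (hH.mono (by rw [uIcc_of_le hax]; exact Icc_subset_Icc le_rfl hxb))
  have j2 : IntervalIntegrable (fun t => rk a b x p k t * h t) volume x b :=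
    hk_xb.mul_continuousOn (hH.mono (by rw [uIcc_of_le hxb]; exact Icc_subset_Icc hax le_rfl))
  -- left piece
  have e1 : ∫ s in a..x, rk a b x p (k + 1) s * h' s
      = (∫ t in a..x, rk a b x p k t * h t) - (∫ t in a..x, rk a b x p k t) * h x := by
    rw [intervalIntegral.integral_congr (g := fun s => (-(∫ t in a..s, rk a b x p k t)) * h' s)
      (fun s hs => by rw [uIcc_of_le hax] at hs; simp only [rk, if_pos hs.2])]
    exact parts_left hax hk_ax hh'_ax (fun t ht => hrep t ⟨ht.1, ht.2.trans hxb⟩)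
  -- right piece
  have e2 : ∫ s in x..b, rk a b x p (k + 1) s * h' s
      = (∫ t in x..b, rk a b x p k t * h t) - (∫ t in x..b, rk a b x p k t) * h x := by
    have congr2 : ∫ s in x..b, rk a b x p (k + 1) s * h' s
        = ∫ s in x..b, (∫ t in s..b, rk a b x p k t) * h' s := by
      rw [intervalIntegral.integral_of_le hxb, intervalIntegral.integral_of_le hxb]
      exact setIntegral_congr_fun measurableSet_Ioc
        (fun s hs => by simp only [rk, if_neg (not_le.2 hs.1)])
    rw [congr2]
    refine parts_right hxb hk_xb hh'_xb (fun t ht => ?_)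
    have h1 : IntervalIntegrable h' volume a t :=
      hh'.mono_set (by
        rw [uIcc_of_le hab]
        exact Set.uIcc_subset_Icc (left_mem_Icc.2 hab) ⟨hax.trans ht.1, ht.2⟩)
    have h2 : IntervalIntegrable h' volume a x := hh'_ax
    have h3 : (∫ u in a..t, h' u) - ∫ u in a..x, h' u = ∫ u in x..t, h' u :=
      intervalIntegral.integral_interval_sub_left h1 h2
    have h4 := hrep t ⟨hax.trans ht.1, ht.2⟩
    have h5 := hrep x ⟨hax, hxb⟩
    rw [h4, h5, ← h3]; ring
  have eL := intervalIntegral.integral_add_adjacent_intervals i1 i2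
  have eH := intervalIntegral.integral_add_adjacent_intervals j1 j2
  have eK := intervalIntegral.integral_add_adjacent_intervals hk_ax hk_xb
  rw [← eL, e1, e2, ← eH, ← eK]
  ring


lemma rk_moment (hax : a ≤ x) (hxb : x ≤ b)
    (hp : IntervalIntegrable p volume a b) (k j : ℕ) :
    ∫ t in a..b, rk a b x p k t * (t - x) ^ j
      = ((Nat.factorial j : ℝ) / (Nat.factorial (j + k) : ℝ))
          * ∫ t in a..b, p t * (t - x) ^ (j + k) := by
  induction k generalizing j with
  | zero =>
    simp only [rk, Nat.add_zero]
    rw [div_self (show (Nat.factorial j : ℝ) ≠ 0 from Nat.cast_ne_zero.2 (Nat.factorial_ne_zero j)),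
      one_mul]
  | succ k ih =>
    have hh' : IntervalIntegrable (fun t => (t - x) ^ j) volume a b :=
      (((continuous_id.sub continuous_const).pow j).intervalIntegrable a b)
    have hrep : ∀ t ∈ Icc a b, (t - x) ^ (j + 1) / ((j : ℝ) + 1)
        = (a - x) ^ (j + 1) / ((j : ℝ) + 1) + ∫ u in a..t, (u - x) ^ j := by
      intro t _
      have : ∫ u in a..t, (u - x) ^ j = ∫ u in (a - x)..(t - x), u ^ j := by
        rw [← intervalIntegral.integral_comp_sub_right (fun u => u ^ j) x]
      rw [this, integral_pow]
      field_simp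
      ring
    have key : ∫ s in a..b, rk a b x p (k + 1) s * (s - x) ^ j
        = (∫ t in a..b, rk a b x p k t * ((t - x) ^ (j + 1) / ((j : ℝ) + 1)))
          - (∫ t in a..b, rk a b x p k t) * ((x - x) ^ (j + 1) / ((j : ℝ) + 1)) :=
      rk_step hax hxb hp k (h := fun t => (t - x) ^ (j + 1) / ((j : ℝ) + 1)) hh' hrep
    have hx0 : ((x : ℝ) - x) ^ (j + 1) / ((j : ℝ) + 1) = 0 := by
      simp [sub_self]
    have e1 : ∫ t in a..b, rk a b x p k t * ((t - x) ^ (j + 1) / ((j : ℝ) + 1))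
        = (∫ t in a..b, rk a b x p k t * (t - x) ^ (j + 1)) * (1 / ((j : ℝ) + 1)) := by
      rw [← intervalIntegral.integral_mul_const]
      exact intervalIntegral.integral_congr (fun t _ => by ring)
    rw [key, hx0, mul_zero, sub_zero, e1, ih (j + 1)]
    have harith : j + 1 + k = j + (k + 1) := by omega
    rw [harith]
    have hj1 : ((j : ℝ) + 1) ≠ 0 := by positivity
    rw [Nat.factorial_succ]
    push_cast
    field_simp
lemma rk_integral (hax : a ≤ x) (hxb : x ≤ b)
    (hp : IntervalIntegrable p volume a b) (k : ℕ) :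
    ∫ t in a..b, rk a b x p k t
      = (1 / (Nat.factorial k : ℝ)) * ∫ t in a..b, p t * (t - x) ^ k := by
  have := rk_moment hax hxb hp k 0
  simp only [pow_zero, mul_one, Nat.factorial_zero, Nat.cast_one, Nat.zero_add, zero_add] at this
  rw [this]

lemma rk_main (hax : a ≤ x) (hxb : x ≤ b)
    (hp : IntervalIntegrable p volume a b) (n : ℕ) (fd : ℕ → ℝ → ℝ)
    (hint : ∀ k < n, IntervalIntegrable (fd (k + 1)) volume a b)
    (hftc : ∀ k < n, ∀ y ∈ Icc a b, fd k y = fd k a + ∫ t in a..y, fd (k + 1) t)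
    (m : ℕ) (hm : m ≤ n) :
    ∫ t in a..b, rk a b x p m t * fd m t
      = (∫ t in a..b, p t * fd 0 t)
        - ∑ k ∈ Finset.range m,
            (1 / (Nat.factorial k : ℝ)) * (∫ t in a..b, p t * (t - x) ^ k) * fd k x := by
  induction m with
  | zero => simp [rk]
  | succ m ih =>
    have h1 : m < n := by omega
    rw [rk_step hax hxb hp m (hint m h1) (hftc m h1), ih (by omega),
      rk_integral hax hxb hp m, Finset.sum_range_succ]
    ring


noncomputable def primit (x : ℝ) (g : ℝ → ℝ) : ℕ → ℝ → ℝ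
  | 0 => g
  | j + 1 => fun y => ∫ t in x..y, primit x g j t

lemma primit_facts {a b x : ℝ} {g : ℝ → ℝ} (hab : a ≤ b) (hx : x ∈ Icc a b)
    (hgc : ContinuousOn g (Icc a b)) (j : ℕ) :
    ContinuousOn (primit x g j) (Icc a b) ∧
      ∀ u ∈ Icc a b, ∀ v ∈ Icc a b, IntervalIntegrable (primit x g j) volume u v := by
  have hsub : ∀ u ∈ Icc a b, ∀ v ∈ Icc a b, uIcc u v ⊆ Icc a b := by
    intro u hu v hv
    rw [← uIcc_of_le hab]
    exact Set.uIcc_subset_uIcc (by rw [uIcc_of_le hab]; exact hu)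
      (by rw [uIcc_of_le hab]; exact hv)
  induction j with
  | zero =>
    refine ⟨hgc, fun u hu v hv => ?_⟩
    exact (hgc.mono (hsub u hu v hv)).intervalIntegrable
  | succ j ih =>
    have hII : IntervalIntegrable (primit x g j) volume a b :=
      ih.2 a (left_mem_Icc.2 hab) b (right_mem_Icc.2 hab)
    have hc : ContinuousOn (primit x g (j + 1)) (Icc a b) := by
      have := intervalIntegral.continuousOn_primitive_interval' hII
        (by rw [uIcc_of_le hab]; exact hx)
      rw [uIcc_of_le hab] at this
      exact this
    exact ⟨hc, fun u hu v hv => (hc.mono (hsub u hu v hv)).intervalIntegrable⟩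

lemma holder_contOn {a b : ℝ} {ω g : ℝ → ℝ} (hωc : Continuous ω) (hω0 : ω 0 = 0)
    (hHol : ∀ u ∈ Icc a b, ∀ v ∈ Icc a b, |g u - g v| ≤ ω |u - v|) :
    ContinuousOn g (Icc a b) := by
  intro u hu
  have h1 : Filter.Tendsto (fun v => ω |v - u|) (nhdsWithin u (Icc a b)) (nhds 0) := by
    have h0 : Filter.Tendsto (fun v : ℝ => |v - u|) (nhds u) (nhds 0) := by
      have := (continuous_abs.comp (continuous_sub_right u)).tendsto u
      simpa [Function.comp_def] using this
    have h2 := (hωc.tendsto 0).comp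
      (h0.mono_left (nhdsWithin_le_nhds (s := Icc a b)))
    simpa [hω0, Function.comp_def] using h2
  have h3 : Filter.Tendsto (fun v => g v - g u) (nhdsWithin u (Icc a b)) (nhds 0) := by
    apply squeeze_zero_norm' ?_ h1
    filter_upwards [self_mem_nhdsWithin] with v hv
    simpa [Real.norm_eq_abs] using hHol v hv u hu
  have h4 := h3.add (tendsto_const_nhds (x := g u))
  simpa [ContinuousWithinAt] using h4

end Aux

open Set in
/-- For a modulus of continuity `ω`, the supremum over `f ∈ WⁿH^ω[a,b]` of the
Ostrowski deviation `|∫ p f − Σ_{k<n} (1/k!)(∫ p(t)(t−x)^k dt) f^{(k)}(x)|` equals the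
supremum over `g ∈ H^ω[a,b]` of `|∫_a^b r_x^n g|`. -/
theorem stmt10 (a b : ℝ) (hab : a < b) (n : ℕ) (hn : 1 ≤ n)
    (ω : ℝ → ℝ) (hωc : Continuous ω) (hωm : MonotoneOn ω (Set.Ici 0))
    (hω0 : ω 0 = 0)
    (hωsub : ∀ s t : ℝ, 0 ≤ s → 0 ≤ t → ω (s + t) ≤ ω s + ω t)
    (p : ℝ → ℝ) (hp : IntervalIntegrable p volume a b)
    (x : ℝ) (hx : x ∈ Set.Icc a b) :
    sSup {v : ℝ | ∃ f : ℝ → ℝ, ∃ fd : ℕ → ℝ → ℝ, fd 0 = f ∧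
        (∀ k < n, IntervalIntegrable (fd (k + 1)) volume a b) ∧
        (∀ k < n, ∀ y ∈ Set.Icc a b, fd k y = fd k a + ∫ t in a..y, fd (k + 1) t) ∧
        (∀ u ∈ Set.Icc a b, ∀ v' ∈ Set.Icc a b, |fd n u - fd n v'| ≤ ω |u - v'|) ∧
        v = |(∫ t in a..b, p t * f t)
              - ∑ k ∈ Finset.range n,
                  (1 / (Nat.factorial k : ℝ)) * (∫ t in a..b, p t * (t - x) ^ k) * fd k x|}
      = sSup {v : ℝ | ∃ g : ℝ → ℝ,
          (∀ u ∈ Set.Icc a b, ∀ v' ∈ Set.Icc a b, |g u - g v'| ≤ ω |u - v'|) ∧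
          v = |∫ t in a..b, rk a b x p n t * g t|} := by
  obtain ⟨hax, hxb⟩ := hx
  have hx' : x ∈ Icc a b := ⟨hax, hxb⟩
  have hab' : a ≤ b := hab.le
  congr 1
  ext v
  simp only [Set.mem_setOf_eq]
  constructor
  · rintro ⟨f, fd, hf0, hint, hftc, hHol, hv⟩
    refine ⟨fd n, hHol, ?_⟩
    rw [hv, rk_main hax hxb hp n fd hint hftc n le_rfl, hf0]
  · rintro ⟨g, hHol, hv⟩
    have hgc : ContinuousOn g (Icc a b) := holder_contOn hωc hω0 hHol
    set fd : ℕ → ℝ → ℝ := fun k => primit x g (n - k) with hfd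
    have hfdn : fd n = g := by rw [hfd]; simp only [Nat.sub_self]; rfl
    have hint : ∀ k < n, IntervalIntegrable (fd (k + 1)) volume a b := by
      intro k hk
      exact (primit_facts hab' hx' hgc (n - (k + 1))).2 a (left_mem_Icc.2 hab')
        b (right_mem_Icc.2 hab')
    have hftc : ∀ k < n, ∀ y ∈ Icc a b, fd k y = fd k a + ∫ t in a..y, fd (k + 1) t := by
      intro k hk y hy
      have hnk : n - k = (n - (k + 1)) + 1 := by omega
      have hIIxa : IntervalIntegrable (primit x g (n - (k + 1))) volume x a :=
        (primit_facts hab' hx' hgc (n - (k + 1))).2 x hx' a (left_mem_Icc.2 hab')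
      have hIIay : IntervalIntegrable (primit x g (n - (k + 1))) volume a y :=
        (primit_facts hab' hx' hgc (n - (k + 1))).2 a (left_mem_Icc.2 hab') y hy
      have e1 : fd k y = ∫ t in x..y, primit x g (n - (k + 1)) t := by
        rw [hfd]; simp only; rw [hnk]; rfl
      have e2 : fd k a = ∫ t in x..a, primit x g (n - (k + 1)) t := by
        rw [hfd]; simp only; rw [hnk]; rfl
      have e3 : fd (k + 1) = primit x g (n - (k + 1)) := rfl
      rw [e1, e2, e3, ← intervalIntegral.integral_add_adjacent_intervals hIIxa hIIay]
    refine ⟨fd 0, fd, rfl, hint, hftc, by rw [hfdn]; exact hHol, ?_⟩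
    rw [hv, ← hfdn, rk_main hax hxb hp n fd hint hftc n le_rfl]
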